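/- Let i* be the largest maximizer of W̃ over {0,…,N}, and suppose that either i* = N or μ(1)·F(i*+1) ≤ r(i*+1). Define the deterministic straightforward signaling scheme φ* by φ*(∅|0) = 1 and φ*({1,…,i*}|1) = 1 (all other subsets receive probability 0). Then φ* is persuasive, and its expected welfare (which equals μ(1)·W̃(i*)) is greater than or equal to the expected welfare of every persuasive straightforward signaling scheme. -/
import Mathlib


open Finset

noncomputable section

/-- Welfare `W(θ, S) = θ·|S|·F(|S|) − Σ_{i∈S} r(i)`. -/
def W (F r : ℕ → ℝ) (θ : ℕ) (S : Finset ℕ) : ℝ :=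
  (θ : ℝ) * S.card * F S.card - ∑ i ∈ S, r i

/-- A straightforward signaling scheme: for each θ ∈ {0,1}, `φ θ` is a probability
distribution over the subsets of the agent set `{1,…,N}`. -/
def IsScheme (N : ℕ) (φ : ℕ → Finset ℕ → ℝ) : Prop :=
  (∀ θ ∈ ({0, 1} : Finset ℕ), ∀ S ∈ (Icc 1 N).powerset, 0 ≤ φ θ S) ∧
  (∀ θ ∈ ({0, 1} : Finset ℕ), ∑ S ∈ (Icc 1 N).powerset, φ θ S = 1)

/-- Expected welfare with prior μ(1) = μ1, μ(0) = 1 − μ1. -/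
def EW (N : ℕ) (F r : ℕ → ℝ) (μ1 : ℝ) (φ : ℕ → Finset ℕ → ℝ) : ℝ :=
  (1 - μ1) * ∑ S ∈ (Icc 1 N).powerset, φ 0 S * W F r 0 S +
  μ1 * ∑ S ∈ (Icc 1 N).powerset, φ 1 S * W F r 1 S

/-- Persuasiveness: the move constraint and the stay constraint for every agent. -/
def Persuasive (N : ℕ) (F r : ℕ → ℝ) (μ1 : ℝ) (φ : ℕ → Finset ℕ → ℝ) : Prop :=
  ∀ i ∈ Icc 1 N,
    (0 ≤ (1 - μ1) * ∑ S ∈ (Icc 1 N).powerset.filter (fun S => i ∈ S),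
            φ 0 S * ((0 : ℝ) * F S.card - r i) +
          μ1 * ∑ S ∈ (Icc 1 N).powerset.filter (fun S => i ∈ S),
            φ 1 S * ((1 : ℝ) * F S.card - r i)) ∧
    ((1 - μ1) * ∑ S ∈ (Icc 1 N).powerset.filter (fun S => i ∉ S),
        φ 0 S * ((0 : ℝ) * F (S.card + 1) - r i) +
      μ1 * ∑ S ∈ (Icc 1 N).powerset.filter (fun S => i ∉ S),
        φ 1 S * ((1 : ℝ) * F (S.card + 1) - r i) ≤ 0)

/-- `p_{ik}`: probability, conditional on θ = 1, that `k` agents are recommended to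
move and agent `i` is among them. -/
def pOf (N : ℕ) (φ : ℕ → Finset ℕ → ℝ) (i k : ℕ) : ℝ :=
  ∑ S ∈ (Icc 1 N).powerset.filter (fun S => i ∈ S ∧ S.card = k), φ 1 S

/-- `W̃(n) = n·F(n) − Σ_{i=1}^n r(i)`. -/
def Wtil (F r : ℕ → ℝ) (n : ℕ) : ℝ :=
  (n : ℝ) * F n - ∑ i ∈ Icc 1 n, r i

lemma rmono_of (N : ℕ) (r : ℕ → ℝ) (h : ∀ i, i + 1 ≤ N → r i ≤ r (i + 1)) :
    ∀ j ≤ N, ∀ i ≤ j, r i ≤ r j := by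
  intro j hj
  induction j with
  | zero => intro i hi; simp [Nat.le_zero.mp hi]
  | succ k ih =>
    intro i hi
    rcases Nat.lt_or_ge i (k + 1) with h1 | h2
    · exact le_trans (ih (by omega) i (by omega)) (h k hj)
    · have : i = k + 1 := by omega
      simp [this]

lemma sum_r_key (N : ℕ) (r : ℕ → ℝ)
    (hmono : ∀ j ≤ N, ∀ i ≤ j, r i ≤ r j) :
    ∀ n (S : Finset ℕ), S.card = n → S ⊆ Icc 1 N →
      ∑ i ∈ Icc 1 n, r i ≤ ∑ i ∈ S, r i := by
  intro n
  induction n with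
  | zero => intro S hc hS; simp [Finset.card_eq_zero.mp hc]
  | succ k ih =>
    intro S hc hS
    have hne : S.Nonempty := Finset.card_pos.mp (by omega)
    set m := S.max' hne with hm
    have hmS : m ∈ S := S.max'_mem hne
    have hmN : m ≤ N := (Finset.mem_Icc.mp (hS hmS)).2
    have hsub : S ⊆ Icc 1 m := by
      intro x hx
      rw [Finset.mem_Icc]
      exact ⟨(Finset.mem_Icc.mp (hS hx)).1, S.le_max' x hx⟩
    have hcard : k + 1 ≤ m := by
      have := Finset.card_le_card hsub
      simpa [hc, Nat.card_Icc] using this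
    have he : (S.erase m).card = k := by rw [Finset.card_erase_of_mem hmS, hc]; omega
    have ihe := ih (S.erase m) he (fun x hx => hS (Finset.mem_of_mem_erase hx))
    have hsp : ∑ i ∈ Icc 1 (k + 1), r i = ∑ i ∈ Icc 1 k, r i + r (k + 1) :=
      Finset.sum_Icc_succ_top (by omega) r
    rw [hsp, ← Finset.sum_erase_add S r hmS]
    exact add_le_add ihe (hmono m hmN (k + 1) hcard)

/-- if `i*` is the largest maximizer of `W̃` and either `i* = N` or
`μ(1)·F(i*+1) ≤ r(i*+1)`, then the deterministic scheme recommending ∅ at θ = 0 and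
`{1,…,i*}` at θ = 1 is persuasive and optimal among persuasive schemes. -/
theorem stmt9 (N : ℕ) (hN : 1 ≤ N) (F r : ℕ → ℝ)
    (hFnn : ∀ n, n ≤ N → 0 ≤ F n) (hF01 : F 0 = F 1)
    (hFmono : ∀ n, n + 1 ≤ N → F (n + 1) ≤ F n)
    (hr0 : r 0 = 0) (hrnn : ∀ i, i ≤ N → 0 ≤ r i)
    (hrmono : ∀ i, i + 1 ≤ N → r i ≤ r (i + 1))
    (μ1 : ℝ) (hμ0 : 0 < μ1) (hμ1 : μ1 < 1)
    (istar : ℕ) (histar : istar ≤ N)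
    (hmax : ∀ n ≤ N, Wtil F r n ≤ Wtil F r istar)
    (hlargest : ∀ n ≤ N, Wtil F r n = Wtil F r istar → n ≤ istar)
    (hcond : istar = N ∨ μ1 * F (istar + 1) ≤ r (istar + 1))
    (φstar : ℕ → Finset ℕ → ℝ)
    (hφ0 : ∀ S : Finset ℕ, φstar 0 S = if S = ∅ then 1 else 0)
    (hφ1 : ∀ S : Finset ℕ, φstar 1 S = if S = Icc 1 istar then 1 else 0) :
    IsScheme N φstar ∧ Persuasive N F r μ1 φstar ∧
      EW N F r μ1 φstar = μ1 * Wtil F r istar ∧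
      ∀ φ : ℕ → Finset ℕ → ℝ, IsScheme N φ → Persuasive N F r μ1 φ →
        EW N F r μ1 φ ≤ EW N F r μ1 φstar := by
  have hrm := rmono_of N r hrmono
  have hAmem : Icc 1 istar ∈ (Icc 1 N).powerset :=
    Finset.mem_powerset.mpr (Finset.Icc_subset_Icc le_rfl histar)
  have hAcard : (Icc 1 istar).card = istar := by simp
  -- F istar ≥ r i for 1 ≤ i ≤ istar
  have hFr : ∀ i, 1 ≤ i → i ≤ istar → r i ≤ F istar := by
    intro i h1 h2
    have his1 : 1 ≤ istar := le_trans h1 h2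
    obtain ⟨m, rfl⟩ : ∃ m, istar = m + 1 := ⟨istar - 1, by omega⟩
    have h1' := hmax m (by omega)
    simp only [Wtil] at h1'
    rw [Finset.sum_Icc_succ_top (by omega) r] at h1'
    have hFm : F (m + 1) ≤ F m := hFmono m histar
    have hmul : (m : ℝ) * F (m + 1) ≤ (m : ℝ) * F m :=
      mul_le_mul_of_nonneg_left hFm (Nat.cast_nonneg m)
    have hri : r i ≤ r (m + 1) := hrm (m + 1) histar i h2
    push_cast at h1'
    nlinarith
  -- Part 1: IsScheme
  have hscheme : IsScheme N φstar := by
    constructor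
    · intro θ hθ S hS
      simp only [mem_insert, mem_singleton] at hθ
      rcases hθ with rfl | rfl
      · rw [hφ0]; split_ifs <;> norm_num
      · rw [hφ1]; split_ifs <;> norm_num
    · intro θ hθ
      simp only [mem_insert, mem_singleton] at hθ
      rcases hθ with rfl | rfl
      · simp only [hφ0]
        rw [Finset.sum_ite_eq']
        simp
      · simp only [hφ1]
        rw [Finset.sum_ite_eq']
        simp [hAmem]
  -- Part 2: Persuasive
  have hpers : Persuasive N F r μ1 φstar := by
    intro i hi
    rw [Finset.mem_Icc] at hi
    constructor
    · -- move constraint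
      have e0 : ∑ S ∈ (Icc 1 N).powerset.filter (fun S => i ∈ S),
          φstar 0 S * ((0 : ℝ) * F S.card - r i) = 0 := by
        apply Finset.sum_eq_zero
        intro S hS
        rw [Finset.mem_filter] at hS
        rw [hφ0]
        split_ifs with h
        · subst h; simp at hS
        · ring
      have e1 : ∑ S ∈ (Icc 1 N).powerset.filter (fun S => i ∈ S),
          φstar 1 S * ((1 : ℝ) * F S.card - r i)
          = if i ≤ istar then F istar - r i else 0 := by
        simp only [hφ1, ite_mul, one_mul, zero_mul]
        rw [Finset.sum_ite_eq']
        by_cases h : i ≤ istar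
        · rw [if_pos, if_pos h]
          · simp [hAcard]
          · exact Finset.mem_filter.mpr ⟨hAmem, Finset.mem_Icc.mpr ⟨hi.1, h⟩⟩
        · rw [if_neg, if_neg h]
          intro hmem
          rw [Finset.mem_filter, Finset.mem_Icc] at hmem
          exact h hmem.2.2
      rw [e0, e1]
      by_cases h : i ≤ istar
      · rw [if_pos h]
        have := hFr i hi.1 h
        nlinarith
      · rw [if_neg h]; simp
    · -- stay constraint
      have e0' : ∑ S ∈ (Icc 1 N).powerset.filter (fun S => i ∉ S),
          φstar 0 S * ((0 : ℝ) * F (S.card + 1) - r i) = - r i := by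
        simp only [hφ0, ite_mul, one_mul, zero_mul]
        rw [Finset.sum_ite_eq', if_pos]
        · simp
        · exact Finset.mem_filter.mpr ⟨Finset.empty_mem_powerset _, Finset.notMem_empty i⟩
      have e1' : ∑ S ∈ (Icc 1 N).powerset.filter (fun S => i ∉ S),
          φstar 1 S * ((1 : ℝ) * F (S.card + 1) - r i)
          = if istar < i then F (istar + 1) - r i else 0 := by
        simp only [hφ1, ite_mul, one_mul, zero_mul]
        rw [Finset.sum_ite_eq']
        by_cases h : istar < i
        · rw [if_pos, if_pos h]
          · simp [hAcard]
          · refine Finset.mem_filter.mpr ⟨hAmem, ?_⟩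
            rw [Finset.mem_Icc]
            omega
        · rw [if_neg, if_neg h]
          intro hmem
          rw [Finset.mem_filter, Finset.mem_Icc] at hmem
          exact hmem.2 ⟨hi.1, by omega⟩
      rw [e0', e1']
      by_cases h : istar < i
      · rw [if_pos h]
        have hiN : istar + 1 ≤ N := by omega
        have hc' : μ1 * F (istar + 1) ≤ r (istar + 1) := by
          rcases hcond with h' | h'
          · omega
          · exact h'
        have hri : r (istar + 1) ≤ r i := hrm i hi.2 (istar + 1) (by omega)
        nlinarith
      · rw [if_neg h]
        have := hrnn i hi.2
        nlinarith
  -- Part 3: EW value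
  have hEW : EW N F r μ1 φstar = μ1 * Wtil F r istar := by
    simp only [EW]
    have e0 : ∑ S ∈ (Icc 1 N).powerset, φstar 0 S * W F r 0 S = 0 := by
      simp only [hφ0, ite_mul, one_mul, zero_mul]
      rw [Finset.sum_ite_eq']
      simp [W]
    have e1 : ∑ S ∈ (Icc 1 N).powerset, φstar 1 S * W F r 1 S = Wtil F r istar := by
      simp only [hφ1, ite_mul, one_mul, zero_mul]
      rw [Finset.sum_ite_eq', if_pos hAmem]
      simp [W, Wtil, hAcard]
    rw [e0, e1]
    ring
  refine ⟨hscheme, hpers, hEW, ?_⟩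
  -- Part 4: optimality
  intro φ hφ _
  obtain ⟨hpos, hsum⟩ := hφ
  have h0mem : (0 : ℕ) ∈ ({0, 1} : Finset ℕ) := by simp
  have h1mem : (1 : ℕ) ∈ ({0, 1} : Finset ℕ) := by simp
  rw [hEW]
  have t0 : ∑ S ∈ (Icc 1 N).powerset, φ 0 S * W F r 0 S ≤ 0 := by
    apply Finset.sum_nonpos
    intro S hS
    have hSsub := Finset.mem_powerset.mp hS
    have hW : W F r 0 S ≤ 0 := by
      have hsnn : 0 ≤ ∑ i ∈ S, r i :=
        Finset.sum_nonneg fun i hiS => hrnn i (Finset.mem_Icc.mp (hSsub hiS)).2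
      simp only [W]
      push_cast
      linarith
    exact mul_nonpos_iff.mpr (Or.inl ⟨hpos 0 h0mem S hS, hW⟩)
  have t1 : ∑ S ∈ (Icc 1 N).powerset, φ 1 S * W F r 1 S ≤ Wtil F r istar := by
    calc ∑ S ∈ (Icc 1 N).powerset, φ 1 S * W F r 1 S
        ≤ ∑ S ∈ (Icc 1 N).powerset, φ 1 S * Wtil F r istar := by
          apply Finset.sum_le_sum
          intro S hS
          have hSsub := Finset.mem_powerset.mp hS
          have hcard : S.card ≤ N := by
            have := Finset.card_le_card hSsub
            simpa [Nat.card_Icc] using this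
          have hWle : W F r 1 S ≤ Wtil F r istar := by
            have h1 := sum_r_key N r hrm S.card S rfl hSsub
            have h2 := hmax S.card hcard
            simp only [W, Wtil] at h2 ⊢
            push_cast
            linarith
          exact mul_le_mul_of_nonneg_left hWle (hpos 1 h1mem S hS)
      _ = Wtil F r istar := by rw [← Finset.sum_mul, hsum 1 h1mem, one_mul]
  simp only [EW]
  have u0 : (1 - μ1) * ∑ S ∈ (Icc 1 N).powerset, φ 0 S * W F r 0 S ≤ 0 :=
    mul_nonpos_iff.mpr (Or.inl ⟨by linarith, t0⟩)
  have u1 : μ1 * ∑ S ∈ (Icc 1 N).powerset, φ 1 S * W F r 1 S ≤ μ1 * Wtil F r istar :=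
    mul_le_mul_of_nonneg_left t1 hμ0.le
  linarith

end
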